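/- Let (X_n) be i.i.d. random variables taking values in [0,1] with mean μ, and let μ̂_n = (1/n) ∑_{k=1}^n X_k. Fix K ≥ 1, δ ∈ (0,1) and ξ ≤ μ. Then the probability that there exists some n ∈ ℕ with μ̂_n + sqrt(log(4*K*n²/δ)/(2n)) < ξ is at most δ/K. -/

import Mathlib

open MeasureTheory ProbabilityTheory
open Real

lemma ucb_D_pos {p : ℝ} (hp0 : 0 ≤ p) (hp1 : p ≤ 1) (u : ℝ) :
    0 < 1 - p + p * Real.exp u := by
  nlinarith [Real.exp_pos u, mul_nonneg hp0 (Real.exp_pos u).le]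

lemma hoeffding_core_nonneg {p : ℝ} (hp0 : 0 ≤ p) (hp1 : p ≤ 1) {t : ℝ} (ht : 0 ≤ t) :
    Real.log (1 - p + p * Real.exp t) - t * p ≤ t ^ 2 / 8 := by
  set D : ℝ → ℝ := fun u => 1 - p + p * Real.exp u with hDdef
  have hD : ∀ u, 0 < D u := fun u => ucb_D_pos hp0 hp1 u
  have hDder : ∀ u, HasDerivAt D (p * Real.exp u) u := fun u => by
    exact ((Real.hasDerivAt_exp u).const_mul p).const_add (1 - p)
  set g : ℝ → ℝ := fun u => p * Real.exp u / D u - p with hgdef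
  have hfder : ∀ u, HasDerivAt (fun u => Real.log (D u) - u * p) (g u) u := fun u =>
    ((hDder u).log (hD u).ne').sub (hasDerivAt_mul_const p)
  have hgder : ∀ u, HasDerivAt g
      ((p * Real.exp u * D u - p * Real.exp u * (p * Real.exp u)) / (D u) ^ 2) u := fun u =>
    (((Real.hasDerivAt_exp u).const_mul p).div (hDder u) (hD u).ne').sub_const p
  have hg'le : ∀ u, (p * Real.exp u * D u - p * Real.exp u * (p * Real.exp u)) / (D u) ^ 2
      ≤ 1 / 4 := by
    intro u
    set s : ℝ := p * Real.exp u / D u with hs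
    have hs0 : 0 ≤ s := div_nonneg (mul_nonneg hp0 (Real.exp_pos u).le) (hD u).le
    have hs1 : s ≤ 1 := by
      rw [hs, div_le_one (hD u)]
      simp only [hDdef]; nlinarith [Real.exp_pos u]
    have : (p * Real.exp u * D u - p * Real.exp u * (p * Real.exp u)) / (D u) ^ 2
        = s - s ^ 2 := by
      rw [hs]
      field_simp [(hD u).ne']
    rw [this]; nlinarith [sq_nonneg (s - 1/2)]
  -- step A : g u ≤ u / 4 for u ≥ 0
  have hg0 : g 0 = 0 := by simp [hgdef, hDdef]
  have hA : ∀ u, 0 ≤ u → g u ≤ u / 4 := by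
    intro u hu
    set h : ℝ → ℝ := fun u => u / 4 - g u with hh
    have hhder : ∀ x, HasDerivAt h (1 / 4 -
        (p * Real.exp x * D x - p * Real.exp x * (p * Real.exp x)) / (D x) ^ 2) x := fun x =>
      ((hasDerivAt_id x).div_const 4).sub (hgder x)
    have hmono : Monotone h := by
      refine monotone_of_deriv_nonneg (fun x => (hhder x).differentiableAt) (fun x => ?_)
      rw [(hhder x).deriv]
      linarith [hg'le x]
    have := hmono hu
    simp only [hh, hg0] at this ⊢
    linarith
  -- step B
  set k : ℝ → ℝ := fun u => u ^ 2 / 8 - (Real.log (D u) - u * p) with hk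
  have hkder : ∀ x, HasDerivAt k (x / 4 - g x) x := fun x => by
    have h1 : HasDerivAt (fun u : ℝ => u ^ 2 / 8) (x / 4) x := by
      have := (hasDerivAt_pow 2 x).div_const 8
      refine this.congr_deriv ?_
      push_cast
      ring
    have := h1.sub (hfder x)
    exact this
  have hkmono : MonotoneOn k (Set.Ici (0:ℝ)) := by
    refine monotoneOn_of_deriv_nonneg (convex_Ici 0)
      (fun x _ => ((hkder x).differentiableAt.continuousAt.continuousWithinAt)) 
      (fun x _ => ((hkder x).differentiableAt.differentiableWithinAt)) (fun x hx => ?_)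
    rw [(hkder x).deriv]
    rw [interior_Ici] at hx
    linarith [hA x (le_of_lt hx)]
  have h0 : k 0 = 0 := by simp [hk, hDdef]
  have := hkmono Set.self_mem_Ici (Set.mem_Ici.mpr ht) ht
  rw [h0] at this
  simp only [hk, hDdef] at this
  linarith

lemma hoeffding_core {p : ℝ} (hp0 : 0 ≤ p) (hp1 : p ≤ 1) (t : ℝ) :
    Real.log (1 - p + p * Real.exp t) ≤ t * p + t ^ 2 / 8 := by
  rcases le_or_gt 0 t with ht | ht
  · linarith [hoeffding_core_nonneg hp0 hp1 ht]
  · have h := hoeffding_core_nonneg (p := 1 - p) (by linarith) (by linarith)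
      (t := -t) (by linarith)
    have hpos : 0 < p + (1 - p) * Real.exp (-t) := by
      have := ucb_D_pos (p := 1 - p) (by linarith) (by linarith) (-t)
      linarith
    have e1 : Real.exp t * Real.exp (-t) = 1 := by
      rw [← Real.exp_add, add_neg_cancel, Real.exp_zero]
    have hid : 1 - p + p * Real.exp t = Real.exp t * (p + (1 - p) * Real.exp (-t)) := by
      linear_combination (p - 1) * e1
    rw [hid, Real.log_mul (Real.exp_pos t).ne' hpos.ne', Real.log_exp]
    have h2 : (1 : ℝ) - (1 - p) + (1 - p) * Real.exp (-t) = p + (1 - p) * Real.exp (-t) := by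
      ring
    rw [h2] at h
    nlinarith [h]

-- mgf bound for a single [0,1]-valued variable
lemma mgf_le_of_Icc {Ω : Type*} [MeasurableSpace Ω] (P : Measure Ω) [IsProbabilityMeasure P]
    {Y : Ω → ℝ} (hYm : Measurable Y) (hb : ∀ ω, Y ω ∈ Set.Icc (0:ℝ) 1)
    {μ : ℝ} (hμ : ∫ ω, Y ω ∂P = μ) (t : ℝ) :
    mgf Y P t ≤ Real.exp (t * μ + t ^ 2 / 8) := by
  have hμ0 : 0 ≤ μ := hμ ▸ integral_nonneg (fun ω => (hb ω).1)
  have hμ1 : μ ≤ 1 := by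
    rw [← hμ]
    calc ∫ ω, Y ω ∂P ≤ ∫ _, (1:ℝ) ∂P := by
          refine integral_mono ?_ (integrable_const 1) (fun ω => (hb ω).2)
          exact (integrable_const 1).mono' hYm.aestronglyMeasurable
            (Filter.Eventually.of_forall fun ω => by
              rw [Real.norm_eq_abs, abs_le]; constructor <;> linarith [(hb ω).1, (hb ω).2])
      _ = 1 := by simp
  have hYint : Integrable Y P :=
    (integrable_const 1).mono' hYm.aestronglyMeasurable
      (Filter.Eventually.of_forall fun ω => by
        rw [Real.norm_eq_abs, abs_le]; constructor <;> linarith [(hb ω).1, (hb ω).2])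
  have hstep : mgf Y P t ≤ 1 - μ + μ * Real.exp t := by
    have hpt : ∀ ω, Real.exp (t * Y ω) ≤ 1 - Y ω + Y ω * Real.exp t := by
      intro ω
      have hc := convexOn_exp.2 (Set.mem_univ (0:ℝ)) (Set.mem_univ t)
        (by linarith [(hb ω).1, (hb ω).2] : (0:ℝ) ≤ 1 - Y ω) (hb ω).1 (by ring)
      simpa [smul_eq_mul, mul_comm] using hc
    have hint2 : Integrable (fun ω => 1 - Y ω + Y ω * Real.exp t) P := by
      exact ((integrable_const 1).sub hYint).add (hYint.mul_const _)
    have hexint : Integrable (fun ω => Real.exp (t * Y ω)) P := by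
      refine (integrable_const (Real.exp |t|)).mono'
        ((hYm.const_mul t).exp).aestronglyMeasurable
        (Filter.Eventually.of_forall fun ω => ?_)
      rw [Real.norm_eq_abs, abs_of_pos (Real.exp_pos _)]
      apply Real.exp_le_exp.mpr
      rcases le_or_gt 0 t with h | h
      · calc t * Y ω ≤ t * 1 := by nlinarith [(hb ω).2]
          _ ≤ |t| := by rw [mul_one]; exact le_abs_self t
      · calc t * Y ω ≤ 0 := by nlinarith [(hb ω).1]
          _ ≤ |t| := abs_nonneg t
    calc mgf Y P t = ∫ ω, Real.exp (t * Y ω) ∂P := rfl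
      _ ≤ ∫ ω, (1 - Y ω + Y ω * Real.exp t) ∂P :=
          integral_mono hexint hint2 hpt
      _ = 1 - μ + μ * Real.exp t := by
          have hfe : (fun ω => 1 - Y ω + Y ω * Real.exp t)
              = fun ω => (1:ℝ) + (Real.exp t - 1) * Y ω := by
            funext ω; ring
          rw [hfe, integral_add (integrable_const 1) (hYint.const_mul _),
            MeasureTheory.integral_const_mul, hμ, integral_const]
          simp; ring
  have hpos : 0 < 1 - μ + μ * Real.exp t := ucb_D_pos hμ0 hμ1 t
  calc mgf Y P t ≤ 1 - μ + μ * Real.exp t := hstep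
    _ = Real.exp (Real.log (1 - μ + μ * Real.exp t)) := (Real.exp_log hpos).symm
    _ ≤ Real.exp (t * μ + t ^ 2 / 8) := Real.exp_le_exp.mpr (hoeffding_core hμ0 hμ1 t)

lemma ucb_exp_integrable {Ω : Type*} [MeasurableSpace Ω] (P : Measure Ω) [IsProbabilityMeasure P]
    {Y : Ω → ℝ} (hYm : Measurable Y) (hb : ∀ ω, Y ω ∈ Set.Icc (0:ℝ) 1) (t : ℝ) :
    Integrable (fun ω => Real.exp (t * Y ω)) P := by
  refine (integrable_const (Real.exp |t|)).mono'
    ((hYm.const_mul t).exp).aestronglyMeasurable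
    (Filter.Eventually.of_forall fun ω => ?_)
  rw [Real.norm_eq_abs, abs_of_pos (Real.exp_pos _)]
  apply Real.exp_le_exp.mpr
  rcases le_or_gt 0 t with h | h
  · calc t * Y ω ≤ t * 1 := by nlinarith [(hb ω).2]
      _ ≤ |t| := by rw [mul_one]; exact le_abs_self t
  · calc t * Y ω ≤ 0 := by nlinarith [(hb ω).1]
      _ ≤ |t| := abs_nonneg t


/-- Lemma A.1: for i.i.d. rewards in `[0,1]` with mean `μ ≥ ξ`, the anytime
upper confidence bound `μ̂_n + √(log(4Kn²/δ)/(2n))` falls below `ξ` at some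
sample count `n ≥ 1` with probability at most `δ/K`. -/
theorem ucb_anytime_error
    {Ω : Type*} [MeasurableSpace Ω] (P : Measure Ω) [IsProbabilityMeasure P]
    (X : ℕ → Ω → ℝ) (hXmeas : ∀ n, Measurable (X n))
    (hindep : iIndepFun X P)
    (hident : ∀ n, Measure.map (X n) P = Measure.map (X 0) P)
    (hbdd : ∀ n ω, X n ω ∈ Set.Icc (0:ℝ) 1)
    (μ : ℝ) (hmean : ∀ n, ∫ ω, X n ω ∂P = μ)
    (K : ℕ) (hK : 1 ≤ K) (δ : ℝ) (hδ : δ ∈ Set.Ioo (0:ℝ) 1)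
    (ξ : ℝ) (hξ : ξ ≤ μ) :
    P {ω | ∃ n : ℕ, 1 ≤ n ∧
        (∑ k ∈ Finset.range n, X k ω) / n
          + Real.sqrt (Real.log (4 * K * (n : ℝ) ^ 2 / δ) / (2 * n)) < ξ}
      ≤ ENNReal.ofReal (δ / K) := by
  obtain ⟨hδ0, hδ1⟩ := hδ
  have hK0 : (0:ℝ) < K := by exact_mod_cast hK.trans_lt' zero_lt_one
  have hK1 : (1:ℝ) ≤ K := by exact_mod_cast hK
  set A : ℕ → Set Ω := fun n => {ω | 1 ≤ n ∧
      (∑ k ∈ Finset.range n, X k ω) / n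
        + Real.sqrt (Real.log (4 * K * (n : ℝ) ^ 2 / δ) / (2 * n)) < ξ} with hA
  have hAbound : ∀ n, P (A n) ≤ ENNReal.ofReal (δ / (4 * K) * (1 / (n:ℝ) ^ 2)) := by
    intro n
    rcases Nat.eq_zero_or_pos n with rfl | hn1
    · have : A 0 = ∅ := by
        ext ω; simp [hA]
      simp [this]
    have hn : (0:ℝ) < n := by exact_mod_cast hn1
    set L : ℝ := Real.log (4 * K * (n : ℝ) ^ 2 / δ) with hL
    set ε : ℝ := Real.sqrt (L / (2 * n)) with hε
    have hx1 : (1:ℝ) < 4 * K * (n:ℝ) ^ 2 / δ := by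
      rw [lt_div_iff₀ hδ0]
      have hn2 : (1:ℝ) ≤ (n:ℝ) ^ 2 := by nlinarith [hn, (by exact_mod_cast hn1 : (1:ℝ) ≤ n)]
      nlinarith [hn2, hK1, hδ1]
    have hLpos : 0 < L := Real.log_pos hx1
    have hε0 : 0 ≤ ε := Real.sqrt_nonneg _
    have hε2 : ε ^ 2 = L / (2 * n) := Real.sq_sqrt (by positivity)
    -- inclusion
    have hsub : A n ⊆ {ω | (∑ k ∈ Finset.range n, X k) ω ≤ n * μ - n * ε} := by
      intro ω hω
      obtain ⟨-, hlt⟩ := hω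
      simp only [Set.mem_setOf_eq, Finset.sum_apply]
      rw [div_add' _ _ _ hn.ne'] at hlt
      have := (div_lt_iff₀ hn).mp hlt
      nlinarith
    -- Chernoff
    set t : ℝ := -(4 * ε) with ht
    have htle : t ≤ 0 := by simp [ht]; positivity
    have h_int := hindep.integrable_exp_mul_sum (t := t) hXmeas
      (s := Finset.range n) (fun i _ => ucb_exp_integrable P (hXmeas i) (hbdd i) t)
    have hcher := measure_le_le_exp_mul_mgf (μ := P) (X := ∑ k ∈ Finset.range n, X k)
      (n * μ - n * ε) htle h_int
    have hmgfprod : mgf (∑ k ∈ Finset.range n, X k) P t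
        ≤ Real.exp (t * μ + t ^ 2 / 8) ^ n := by
      rw [hindep.mgf_sum hXmeas (Finset.range n)]
      calc ∏ k ∈ Finset.range n, mgf (X k) P t
          ≤ ∏ _k ∈ Finset.range n, Real.exp (t * μ + t ^ 2 / 8) :=
            Finset.prod_le_prod (fun k _ => mgf_nonneg)
              (fun k _ => mgf_le_of_Icc P (hXmeas k) (hbdd k) (hmean k) t)
        _ = Real.exp (t * μ + t ^ 2 / 8) ^ n := by
            rw [Finset.prod_const, Finset.card_range]
    have hkey : (P {ω | (∑ k ∈ Finset.range n, X k) ω ≤ n * μ - n * ε}).toReal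
        ≤ δ / (4 * K * (n:ℝ) ^ 2) := by
      calc (P {ω | (∑ k ∈ Finset.range n, X k) ω ≤ n * μ - n * ε}).toReal
          ≤ Real.exp (-t * (n * μ - n * ε)) * mgf (∑ k ∈ Finset.range n, X k) P t := hcher
        _ ≤ Real.exp (-t * (n * μ - n * ε)) * Real.exp (t * μ + t ^ 2 / 8) ^ n := by
            gcongr
        _ = Real.exp (-t * (n * μ - n * ε) + n * (t * μ + t ^ 2 / 8)) := by
            rw [← Real.exp_nat_mul, ← Real.exp_add]
        _ = Real.exp (-(2 * n * ε ^ 2)) := by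
            congr 1; rw [ht]; ring
        _ = Real.exp (-L) := by
            congr 1
            rw [hε2]
            field_simp
        _ = δ / (4 * K * (n:ℝ) ^ 2) := by
            rw [hL, Real.exp_neg, Real.exp_log (by positivity), inv_div]
    have heq : δ / (4 * K * (n:ℝ) ^ 2) = δ / (4 * K) * (1 / (n:ℝ) ^ 2) := by
      field_simp
    calc P (A n) ≤ P {ω | (∑ k ∈ Finset.range n, X k) ω ≤ n * μ - n * ε} :=
          measure_mono hsub
      _ = ENNReal.ofReal ((P {ω | (∑ k ∈ Finset.range n, X k) ω ≤ n * μ - n * ε}).toReal) :=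
          (ENNReal.ofReal_toReal (measure_ne_top _ _)).symm
      _ ≤ ENNReal.ofReal (δ / (4 * K) * (1 / (n:ℝ) ^ 2)) := by
          rw [← heq]; exact ENNReal.ofReal_le_ofReal hkey
  -- union bound
  have hset : {ω | ∃ n : ℕ, 1 ≤ n ∧
        (∑ k ∈ Finset.range n, X k ω) / n
          + Real.sqrt (Real.log (4 * K * (n : ℝ) ^ 2 / δ) / (2 * n)) < ξ}
      = ⋃ n, A n := by
    ext ω; simp [hA]
  rw [hset]
  have hsummable : Summable (fun n : ℕ => δ / (4 * K) * (1 / (n:ℝ) ^ 2)) :=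
    (Real.summable_one_div_nat_pow.mpr one_lt_two).mul_left _
  calc P (⋃ n, A n) ≤ ∑' n, P (A n) := measure_iUnion_le A
    _ ≤ ∑' n : ℕ, ENNReal.ofReal (δ / (4 * K) * (1 / (n:ℝ) ^ 2)) :=
        ENNReal.tsum_le_tsum hAbound
    _ = ENNReal.ofReal (∑' n : ℕ, δ / (4 * K) * (1 / (n:ℝ) ^ 2)) :=
        (ENNReal.ofReal_tsum_of_nonneg (fun n => by positivity) hsummable).symm
    _ = ENNReal.ofReal (δ / (4 * K) * (π ^ 2 / 6)) := by
        rw [tsum_mul_left, hasSum_zeta_two.tsum_eq]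
    _ ≤ ENNReal.ofReal (δ / K) := by
        apply ENNReal.ofReal_le_ofReal
        have hπ : π ^ 2 ≤ 24 := by nlinarith [Real.pi_lt_d2, Real.pi_pos]
        have he : δ / (4 * (K:ℝ)) * (π ^ 2 / 6) = δ / K * (π ^ 2 / 24) := by
          field_simp; ring
        rw [he]
        calc δ / (K:ℝ) * (π ^ 2 / 24) ≤ δ / K * 1 := by
              apply mul_le_mul_of_nonneg_left _ (by positivity)
              linarith
          _ = δ / K := mul_one _
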